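/- arXiv:2311.17806 — 4 statements merged into one kernel-verified Lean document; each statement's English description precedes it below -/
import Mathlib

section
/- Let Δ' be a pure simplicial complex whose facets admit a shelling order F₁ ≺ ⋯ ≺ Fₙ. Then for every vertex v of Δ', the link of v in Δ' is shellable, with shelling order induced by restricting the given order to those facets containing v and deleting v from each. -/
/-- An ordering `F 0 ≺ F 1 ≺ ⋯` of facets is a shelling if for each `i ≥ 1` the complex
`⟨F i⟩ ∩ ⟨F 0, …, F (i-1)⟩` is pure of dimension `dim (F i) - 1`: it contains a face of
cardinality `(F i).card - 1`, and every face of it extends to such a face inside it. -/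
def SimplicialShelling {V : Type*} {n : ℕ} (F : Fin n → Finset V) : Prop :=
  ∀ i : Fin n, 0 < (i : ℕ) →
    (∃ H : Finset V, H ⊆ F i ∧ (∃ j, j < i ∧ H ⊆ F j) ∧ H.card + 1 = (F i).card) ∧
    (∀ G : Finset V, G ⊆ F i → (∃ j, j < i ∧ G ⊆ F j) →
      ∃ H : Finset V, H ⊆ F i ∧ (∃ j, j < i ∧ H ⊆ F j) ∧ G ⊆ H ∧ H.card + 1 = (F i).card)

/-- The link of a vertex of a pure shellable complex is shellable, with the
induced order on the facets containing `v` (with `v` deleted). -/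
theorem stmt_2 {V : Type*} [DecidableEq V] {n m : ℕ} (F : Fin n → Finset V)
    (hpure : ∀ i j, (F i).card = (F j).card)
    (hshell : SimplicialShelling F)
    (v : V) (hv : ∃ i, v ∈ F i)
    (e : Fin m → Fin n) (hmono : StrictMono e)
    (hrange : ∀ i : Fin n, v ∈ F i ↔ ∃ j, e j = i) :
    SimplicialShelling (fun j : Fin m => F (e j) \ {v}) := by
  intro j hj
  have hm : 0 < m := j.pos
  have hz : (⟨0, hm⟩ : Fin m) < j := by simpa [Fin.lt_def] using hj
  have hej : 0 < ((e j : Fin n) : ℕ) := by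
    have := hmono hz
    rw [Fin.lt_def] at this
    omega
  have hvj : v ∈ F (e j) := (hrange (e j)).2 ⟨j, rfl⟩
  have key : ∀ G : Finset V, G ⊆ F (e j) \ {v} →
      (∃ j', j' < j ∧ G ⊆ F (e j') \ {v}) →
      ∃ H : Finset V, H ⊆ F (e j) \ {v} ∧ (∃ j', j' < j ∧ H ⊆ F (e j') \ {v}) ∧
        G ⊆ H ∧ H.card + 1 = (F (e j) \ {v}).card := by
    rintro G hG ⟨j', hj', hGj'⟩
    have hvj' : v ∈ F (e j') := (hrange (e j')).2 ⟨j', rfl⟩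
    have hG1 : insert v G ⊆ F (e j) := by
      intro x hx
      rcases Finset.mem_insert.1 hx with rfl | hx
      · exact hvj
      · exact (Finset.mem_sdiff.1 (hG hx)).1
    have hG2 : insert v G ⊆ F (e j') := by
      intro x hx
      rcases Finset.mem_insert.1 hx with rfl | hx
      · exact hvj'
      · exact (Finset.mem_sdiff.1 (hGj' hx)).1
    obtain ⟨H, hHi, ⟨k, hk, hHk⟩, hGH, hcard⟩ :=
      (hshell (e j) hej).2 (insert v G) hG1 ⟨e j', hmono hj', hG2⟩
    have hvH : v ∈ H := hGH (Finset.mem_insert_self v G)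
    obtain ⟨j'', hj''⟩ := (hrange k).1 (hHk hvH)
    refine ⟨H \ {v}, Finset.sdiff_subset_sdiff hHi subset_rfl, ⟨j'', ?_, ?_⟩, ?_, ?_⟩
    · exact hmono.lt_iff_lt.1 (by rw [hj'']; exact hk)
    · rw [hj'']; exact Finset.sdiff_subset_sdiff hHk subset_rfl
    · intro x hx
      refine Finset.mem_sdiff.2 ⟨hGH (Finset.mem_insert_of_mem hx), ?_⟩
      exact (Finset.mem_sdiff.1 (hG hx)).2
    · have h1 : (H \ {v}).card = H.card - 1 := by
        rw [Finset.card_sdiff_of_subset (by simpa using hvH)]; simp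
      have h2 : (F (e j) \ {v}).card = (F (e j)).card - 1 := by
        rw [Finset.card_sdiff_of_subset (by simpa using hvj)]; simp
      have hH1 : 1 ≤ H.card := Finset.card_pos.2 ⟨v, hvH⟩
      omega
  refine ⟨?_, key⟩
  obtain ⟨H, h1, h2, _, h4⟩ := key ∅ (Finset.empty_subset _)
    ⟨⟨0, hm⟩, hz, Finset.empty_subset _⟩
  exact ⟨H, h1, h2, h4⟩
end

section
/- Let ψ : Δ' → Δ be a surjective, dimension-preserving simplicial map of finite simplicial complexes, and let x be a vertex of Δ with preimage vertices v₁, …, v_s. Then link_Δ(x) = ⋃_{j=1}^{s} ψ(link_{Δ'}(v_j)), where ψ(link_{Δ'}(v_j)) denotes the simplicial complex of images of faces of link_{Δ'}(v_j). -/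
/-- For a surjective dimension-preserving simplicial map `ψ : Δ' → Δ` and a
vertex `x` of `Δ`, the link of `x` in `Δ` is the union over the preimage vertices `v` of
`x` of the images of the links of `v` in `Δ'`. -/
theorem stmt_3 {V' V : Type*} [DecidableEq V'] [DecidableEq V]
    (Δ' : Set (Finset V')) (Δ : Set (Finset V))
    (hΔ' : ∀ F ∈ Δ', ∀ G ⊆ F, G ∈ Δ')
    (hΔ : ∀ F ∈ Δ, ∀ G ⊆ F, G ∈ Δ)
    (ψ : V' → V)
    (hmap : ∀ F ∈ Δ', Finset.image ψ F ∈ Δ)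
    (hdim : ∀ F ∈ Δ', (Finset.image ψ F).card = F.card)
    (hsurj : ∀ F ∈ Δ, ∃ G ∈ Δ', Finset.image ψ G = F)
    (x : V) (hx : ({x} : Finset V) ∈ Δ) :
    ∀ F : Finset V,
      (F ∈ Δ ∧ x ∉ F ∧ insert x F ∈ Δ) ↔
      (∃ v : V', ψ v = x ∧
        ∃ G ∈ Δ', v ∉ G ∧ insert v G ∈ Δ' ∧ Finset.image ψ G = F) := by
  intro F
  constructor
  · rintro ⟨hF, hxF, hins⟩
    obtain ⟨G', hG', hGim⟩ := hsurj (insert x F) hins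
    have hinj : Set.InjOn ψ G' :=
      Finset.injOn_of_card_image_eq (by rw [hdim G' hG'])
    have hxim : x ∈ Finset.image ψ G' := by rw [hGim]; exact Finset.mem_insert_self x F
    obtain ⟨v, hvG', hv⟩ := Finset.mem_image.mp hxim
    refine ⟨v, hv, G'.erase v, hΔ' G' hG' _ (Finset.erase_subset v G'),
      Finset.notMem_erase v G', by rwa [Finset.insert_erase hvG'], ?_⟩
    apply Finset.ext
    intro y
    simp only [Finset.mem_image, Finset.mem_erase]
    constructor
    · rintro ⟨a, ⟨hav, haG⟩, rfl⟩
      have : ψ a ∈ insert x F := by rw [← hGim]; exact Finset.mem_image_of_mem ψ haG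
      rcases Finset.mem_insert.mp this with h | h
      · exact absurd (hinj haG hvG' (h.trans hv.symm)) hav
      · exact h
    · intro hy
      have : y ∈ Finset.image ψ G' := by
        rw [hGim]; exact Finset.mem_insert_of_mem hy
      obtain ⟨a, haG, ha⟩ := Finset.mem_image.mp this
      refine ⟨a, ⟨?_, haG⟩, ha⟩
      rintro rfl
      rw [hv] at ha
      exact hxF (ha ▸ hy)
  · rintro ⟨v, hv, G, hG, hvG, hins, rfl⟩
    have h1 : Finset.image ψ (insert v G) = insert x (Finset.image ψ G) := by
      rw [Finset.image_insert, hv]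
    refine ⟨hmap G hG, ?_, h1 ▸ hmap _ hins⟩
    intro hxF
    have hc := hdim _ hins
    rw [h1, Finset.card_insert_of_notMem hvG, Finset.insert_eq_self.mpr hxF] at hc
    have := hdim G hG
    omega
end

section
/- Let ψ : Δ' → Δ be a surjective, dimension-preserving simplicial map of finite simplicial complexes, let B be a subcomplex of Δ such that every face F of Δ with more than one preimage face under ψ lies in B. Let x be a vertex of Δ and v ≠ w two distinct preimage vertices of x in Δ'. Then for any face F of Δ lying in both ψ(link_{Δ'}(v)) and ψ(link_{Δ'}(w)), the face F ∪ {x} lies in B. -/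
/-- If every face of `Δ` with more than one preimage face lies in the
subcomplex `B`, and `v ≠ w` are preimage vertices of `x`, then any face `F` lying in both
`ψ(link_{Δ'}(v))` and `ψ(link_{Δ'}(w))` satisfies `F ∪ {x} ∈ B`. -/
theorem stmt_4 {V' V : Type*} [DecidableEq V'] [DecidableEq V]
    (Δ' : Set (Finset V')) (Δ : Set (Finset V))
    (hΔ' : ∀ F ∈ Δ', ∀ G ⊆ F, G ∈ Δ')
    (hΔ : ∀ F ∈ Δ, ∀ G ⊆ F, G ∈ Δ)
    (ψ : V' → V)
    (hmap : ∀ F ∈ Δ', Finset.image ψ F ∈ Δ)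
    (hdim : ∀ F ∈ Δ', (Finset.image ψ F).card = F.card)
    (hsurj : ∀ F ∈ Δ, ∃ G ∈ Δ', Finset.image ψ G = F)
    (B : Set (Finset V)) (hBsub : B ⊆ Δ) (hBcx : ∀ F ∈ B, ∀ G ⊆ F, G ∈ B)
    (hfib : ∀ F ∈ Δ, (∃ G ∈ Δ', ∃ G' ∈ Δ', G ≠ G' ∧
        Finset.image ψ G = F ∧ Finset.image ψ G' = F) → F ∈ B)
    (x : V) (v w : V') (hvw : v ≠ w) (hv : ψ v = x) (hw : ψ w = x)
    (F : Finset V)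
    (hFv : ∃ G ∈ Δ', v ∉ G ∧ insert v G ∈ Δ' ∧ Finset.image ψ G = F)
    (hFw : ∃ G ∈ Δ', w ∉ G ∧ insert w G ∈ Δ' ∧ Finset.image ψ G = F) :
    insert x F ∈ B := by
  obtain ⟨G, hG, hvG, hvGΔ, hGF⟩ := hFv
  obtain ⟨H, hH, hwH, hwHΔ, hHF⟩ := hFw
  have himgv : Finset.image ψ (insert v G) = insert x F := by
    rw [Finset.image_insert, hv, hGF]
  have himgw : Finset.image ψ (insert w H) = insert x F := by
    rw [Finset.image_insert, hw, hHF]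
  have hne : insert v G ≠ insert w H := by
    intro h
    have hinj : Set.InjOn ψ (insert w H : Finset V') :=
      Finset.card_image_iff.mp (hdim _ hwHΔ)
    have hvmem : v ∈ insert w H := h ▸ Finset.mem_insert_self v G
    exact hvw (hinj hvmem (Finset.mem_insert_self w H) (hv.trans hw.symm))
  exact hfib _ (himgv ▸ hmap _ hvGΔ)
    ⟨insert v G, hvGΔ, insert w H, hwHΔ, hne, himgv, himgw⟩
end

section
/- Let ψ : Δ' → Δ be a surjective, dimension-preserving simplicial map of finite simplicial complexes, and let F₁, F₂ be faces of Δ' such that ψ(F₁) ∩ ψ(F₂) has exactly one preimage face under ψ (i.e., there is a unique face G of Δ' with ψ(G) = ψ(F₁) ∩ ψ(F₂)). If v ∈ F₁ and w ∈ F₂ are vertices with ψ(v) = ψ(w) and ψ(v) ∈ ψ(F₁) ∩ ψ(F₂), then v = w. -/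
/-- if `ψ(F₁) ∩ ψ(F₂)` has a unique preimage face, then preimage vertices
in `F₁` and `F₂` of a common vertex of the intersection coincide. -/
theorem stmt_10 {V' V : Type*} [DecidableEq V'] [DecidableEq V]
    (Δ' : Set (Finset V')) (Δ : Set (Finset V))
    (hΔ' : ∀ F ∈ Δ', ∀ G ⊆ F, G ∈ Δ')
    (hΔ : ∀ F ∈ Δ, ∀ G ⊆ F, G ∈ Δ)
    (ψ : V' → V)
    (hmap : ∀ F ∈ Δ', Finset.image ψ F ∈ Δ)
    (hdim : ∀ F ∈ Δ', (Finset.image ψ F).card = F.card)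
    (hsurj : ∀ F ∈ Δ, ∃ G ∈ Δ', Finset.image ψ G = F)
    (F₁ F₂ : Finset V') (hF₁ : F₁ ∈ Δ') (hF₂ : F₂ ∈ Δ')
    (huniq : ∃! G : Finset V', G ∈ Δ' ∧
      Finset.image ψ G = Finset.image ψ F₁ ∩ Finset.image ψ F₂)
    (v w : V') (hv : v ∈ F₁) (hw : w ∈ F₂) (hvw : ψ v = ψ w)
    (hmem : ψ v ∈ Finset.image ψ F₁ ∩ Finset.image ψ F₂) :
    v = w := by
  classical
  set I := Finset.image ψ F₁ ∩ Finset.image ψ F₂ with hI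
  set A := F₁.filter (fun x => ψ x ∈ I) with hA
  set B := F₂.filter (fun x => ψ x ∈ I) with hB
  have hAsub : A ⊆ F₁ := Finset.filter_subset _ _
  have hBsub : B ⊆ F₂ := Finset.filter_subset _ _
  have hAΔ : A ∈ Δ' := hΔ' F₁ hF₁ A hAsub
  have hBΔ : B ∈ Δ' := hΔ' F₂ hF₂ B hBsub
  have himA : Finset.image ψ A = I := by
    apply Finset.Subset.antisymm
    · intro y hy
      obtain ⟨x, hx, rfl⟩ := Finset.mem_image.mp hy
      exact (Finset.mem_filter.mp hx).2
    · intro y hy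
      have : y ∈ Finset.image ψ F₁ := (Finset.mem_inter.mp hy).1
      obtain ⟨x, hx, rfl⟩ := Finset.mem_image.mp this
      exact Finset.mem_image.mpr ⟨x, Finset.mem_filter.mpr ⟨hx, hy⟩, rfl⟩
  have himB : Finset.image ψ B = I := by
    apply Finset.Subset.antisymm
    · intro y hy
      obtain ⟨x, hx, rfl⟩ := Finset.mem_image.mp hy
      exact (Finset.mem_filter.mp hx).2
    · intro y hy
      have : y ∈ Finset.image ψ F₂ := (Finset.mem_inter.mp hy).2
      obtain ⟨x, hx, rfl⟩ := Finset.mem_image.mp this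
      exact Finset.mem_image.mpr ⟨x, Finset.mem_filter.mpr ⟨hx, hy⟩, rfl⟩
  obtain ⟨G, hG, hGuniq⟩ := huniq
  have hAG : A = G := hGuniq A ⟨hAΔ, himA⟩
  have hBG : B = G := hGuniq B ⟨hBΔ, himB⟩
  have hvA : v ∈ A := Finset.mem_filter.mpr ⟨hv, hmem⟩
  have hwB : w ∈ B := Finset.mem_filter.mpr ⟨hw, hvw ▸ hmem⟩
  have hinj : Set.InjOn ψ (G : Set V') := Finset.card_image_iff.mp (hdim G hG.1)
  exact hinj (hAG ▸ hvA) (hBG ▸ hwB) hvw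
end
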